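/- Let I_1, …, I_l ⊆ {1,…,m} be index sets such that span{v_h : h ∈ I_1 ∪ ⋯ ∪ I_l} = Row(A) (equivalently, the union contains a maximal linearly independent subset S of the rows of A). Then the composition of projections P_{I_l} ∘ ⋯ ∘ P_{I_1}, restricted to Row(A), has operator norm strictly less than 1; that is, for every x ∈ Row(A) with ‖x‖ = 1, one has ‖P_{I_l}(⋯(P_{I_1} x)⋯)‖ < 1. -/

import Mathlib

/-- The orthogonal projection of `E` onto the orthogonal complement of
`span {v h : h ∈ I}`, i.e. the projection `I - A_I† A_I` onto the null space of the
row block `A_I` of the matrix `A` whose rows are the vectors `v h`. -/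
noncomputable def projPerp {E : Type*} [NormedAddCommGroup E] [InnerProductSpace ℝ E]
    [FiniteDimensional ℝ E] {m : ℕ} (v : Fin m → E) (I : Set (Fin m)) (x : E) : E :=
  (Submodule.orthogonalProjectionOnto (Submodule.span ℝ (v '' I))ᗮ x : E)

lemma norm_proj_le {E : Type*} [NormedAddCommGroup E] [InnerProductSpace ℝ E]
    [FiniteDimensional ℝ E] (K : Submodule ℝ E) [K.HasOrthogonalProjection] (x : E) :
    ‖(Submodule.orthogonalProjectionOnto K x : E)‖ ≤ ‖x‖ := by
  calc ‖(Submodule.orthogonalProjectionOnto K x : E)‖ = ‖Submodule.orthogonalProjectionOnto K x‖ := rfl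
    _ ≤ ‖Submodule.orthogonalProjectionOnto K‖ * ‖x‖ := (Submodule.orthogonalProjectionOnto K).le_opNorm x
    _ ≤ 1 * ‖x‖ := mul_le_mul_of_nonneg_right (Submodule.orthogonalProjectionOnto_norm_le K) (norm_nonneg x)
    _ = ‖x‖ := one_mul _

lemma eq_of_norm_proj_eq {E : Type*} [NormedAddCommGroup E] [InnerProductSpace ℝ E]
    [FiniteDimensional ℝ E] (K : Submodule ℝ E) [K.HasOrthogonalProjection] (x : E)
    (h : ‖(Submodule.orthogonalProjectionOnto K x : E)‖ = ‖x‖) : (Submodule.orthogonalProjectionOnto K x : E) = x := by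
  have hmem : x - Submodule.orthogonalProjectionOnto K x ∈ Kᗮ := K.sub_starProjection_mem_orthogonal x
  have horth : inner (𝕜 := ℝ) ((Submodule.orthogonalProjectionOnto K x : E)) (x - Submodule.orthogonalProjectionOnto K x) = (0:ℝ) :=
    hmem (Submodule.orthogonalProjectionOnto K x) (Submodule.orthogonalProjectionOnto K x).2
  have hpyth : ‖x‖ ^ 2 = ‖(Submodule.orthogonalProjectionOnto K x : E)‖ ^ 2 +
      ‖x - Submodule.orthogonalProjectionOnto K x‖ ^ 2 := by
    have := norm_add_sq_real (Submodule.orthogonalProjectionOnto K x : E) (x - Submodule.orthogonalProjectionOnto K x)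
    rw [horth] at this
    simpa using this
  have h0 : ‖x - (Submodule.orthogonalProjectionOnto K x : E)‖ = 0 := by
    have h2 : ‖x - (Submodule.orthogonalProjectionOnto K x : E)‖ ^ 2 = 0 := by rw [h] at hpyth; linarith
    exact pow_eq_zero_iff (by norm_num) |>.mp h2
  have := sub_eq_zero.mp (norm_eq_zero.mp h0)
  exact this.symm

lemma fold_norm_le {E : Type*} [NormedAddCommGroup E] [InnerProductSpace ℝ E]
    [FiniteDimensional ℝ E] {m : ℕ} (v : Fin m → E) :
    ∀ (L : List (Set (Fin m))) (x : E),
      ‖(L.map (projPerp v)).foldl (fun y f => f y) x‖ ≤ ‖x‖ := by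
  intro L
  induction L with
  | nil => intro x; simp
  | cons I L ih =>
    intro x
    simp only [List.map_cons, List.foldl_cons]
    exact (ih (projPerp v I x)).trans (norm_proj_le _ x)

lemma fold_mem_of_norm_eq {E : Type*} [NormedAddCommGroup E] [InnerProductSpace ℝ E]
    [FiniteDimensional ℝ E] {m : ℕ} (v : Fin m → E) :
    ∀ (L : List (Set (Fin m))) (x : E),
      ‖(L.map (projPerp v)).foldl (fun y f => f y) x‖ = ‖x‖ →
      ∀ I ∈ L, x ∈ (Submodule.span ℝ (v '' I))ᗮ := by
  intro L
  induction L with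
  | nil => intro x _ I hI; simp at hI
  | cons J L ih =>
    intro x hx I hI
    simp only [List.map_cons, List.foldl_cons] at hx
    have h1 : ‖projPerp v J x‖ = ‖x‖ := by
      have hle1 := fold_norm_le v L (projPerp v J x)
      have hle2 := norm_proj_le (Submodule.span ℝ (v '' J))ᗮ x
      have : ‖projPerp v J x‖ ≤ ‖x‖ := hle2
      linarith [hx ▸ hle1, this]
    have heq : projPerp v J x = x := eq_of_norm_proj_eq _ x h1
    rcases List.mem_cons.mp hI with rfl | hI'
    · rw [← heq]; exact (Submodule.orthogonalProjectionOnto _ x).2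
    · exact ih x (by rw [← hx, heq]) I hI'

/-- **Lemma 1.** If the index sets `I_1, …, I_l ⊆ {1,…,m}` are such that
`span {v_h : h ∈ I_1 ∪ ⋯ ∪ I_l} = Row(A)`, then the composition
`P_{I_l} ∘ ⋯ ∘ P_{I_1}`, restricted to `Row(A)`, has operator norm strictly less
than `1`: for every `x ∈ Row(A)` with `‖x‖ = 1`, `‖P_{I_l}(⋯(P_{I_1} x)⋯)‖ < 1`. -/
theorem norm_comp_projPerp_lt_one
    {E : Type*} [NormedAddCommGroup E] [InnerProductSpace ℝ E] [FiniteDimensional ℝ E]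
    {m l : ℕ} (v : Fin m → E) (Is : Fin l → Set (Fin m))
    (hspan : Submodule.span ℝ (v '' (⋃ t, Is t)) = Submodule.span ℝ (Set.range v)) :
    ∀ x ∈ Submodule.span ℝ (Set.range v), ‖x‖ = 1 →
      ‖(List.ofFn fun t => projPerp v (Is t)).foldl (fun y f => f y) x‖ < 1 := by
  intro x hx hnx
  by_contra hcon
  push_neg at hcon
  have hlist : (List.ofFn fun t => projPerp v (Is t)) = (List.ofFn Is).map (projPerp v) := by
    exact (List.map_ofFn (f := Is) (g := projPerp v)).symm
  have hle : ‖((List.ofFn Is).map (projPerp v)).foldl (fun y f => f y) x‖ ≤ ‖x‖ :=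
    fold_norm_le v _ x
  rw [hlist] at hcon
  have heq : ‖((List.ofFn Is).map (projPerp v)).foldl (fun y f => f y) x‖ = ‖x‖ := by
    rw [hnx] at hle ⊢; linarith
  have hmem := fold_mem_of_norm_eq v (List.ofFn Is) x heq
  have hall : ∀ t : Fin l, x ∈ (Submodule.span ℝ (v '' Is t))ᗮ := fun t =>
    hmem (Is t) (List.mem_ofFn.mpr ⟨t, rfl⟩)
  have hinf : x ∈ (⨆ t, Submodule.span ℝ (v '' Is t))ᗮ := by
    rw [← Submodule.iInf_orthogonal]
    exact Submodule.mem_iInf _ |>.mpr hall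
  have hsup : Submodule.span ℝ (v '' ⋃ t, Is t) = ⨆ t, Submodule.span ℝ (v '' Is t) := by
    rw [Set.image_iUnion, Submodule.span_iUnion]
  have hxo : x ∈ (Submodule.span ℝ (Set.range v))ᗮ := by
    rw [← hspan, hsup]; exact hinf
  have : x = 0 := by
    have := hxo x hx
    simpa using this
  rw [this] at hnx
  simp at hnx
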